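/- arXiv:1710.01208 — 2 statements merged into one kernel-verified Lean document; each statement's English description precedes it below -/
import Mathlib

section
/- Fix L ≥ 1, probabilities p_1,…,p_L and a mean μ > 0, and let G = G(p_L). If z̃_G ≤ e^{−1/(L+1)}, then for every F ∈ F(μ,p_L) one has g_F(z̃_F) ≤ g_G(z̃_G^{(μ)}); equivalently, ξ_F ≥ 1 − g_G(z̃_G^{(μ)}). -/
open scoped BigOperators

/-- A degree distribution: a sequence of nonnegative probabilities on the positive
integers summing to one, with finite mean and `p 2 ≠ 1`. -/
structure DegreeDist where
  p : ℕ → ℝ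
  nonneg : ∀ d, 0 ≤ p d
  zero : p 0 = 0
  psummable : Summable p
  sum_one : ∑' d : ℕ, p d = 1
  mean_summable : Summable fun d : ℕ => (d : ℝ) * p d
  two_ne_one : p 2 ≠ 1

/-- The mean `μ_F` of a degree distribution. -/
noncomputable def mu (F : DegreeDist) : ℝ := ∑' d : ℕ, (d : ℝ) * F.p d

/-- The probability generating function `g_F`. -/
noncomputable def pgf (F : DegreeDist) (s : ℝ) : ℝ := ∑' d : ℕ, F.p d * s ^ d

/-- The derivative `g_F'` of the probability generating function. -/
noncomputable def pgfD (F : DegreeDist) (s : ℝ) : ℝ := ∑' d : ℕ, (d : ℝ) * F.p d * s ^ (d - 1)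

/-- `z` is the smallest `s ∈ [0,1]` with `m * s = g_F'(s)`.  Taking `m = mu F` gives `z̃_F`;
taking `m = μ` gives `z̃_F^{(μ)}`. -/
def IsSmallestRoot (F : DegreeDist) (m z : ℝ) : Prop :=
  z ∈ Set.Icc (0 : ℝ) 1 ∧ m * z = pgfD F z ∧
    ∀ s ∈ Set.Icc (0 : ℝ) 1, m * s = pgfD F s → z ≤ s

/-- Membership in the class `F(p_L)`: the first `L` probabilities agree with `p`. -/
def MemF (L : ℕ) (p : ℕ → ℝ) (F : DegreeDist) : Prop :=
  ∀ d, 1 ≤ d → d ≤ L → F.p d = p d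

/-- The remaining mass `p_{>L} = 1 - ∑_{i=1}^L p_i`. -/
noncomputable def pGt (L : ℕ) (p : ℕ → ℝ) : ℝ := 1 - ∑ i ∈ Finset.Icc 1 L, p i

/-- The distribution `G = G(p_L)`: all remaining mass at `L+1`. -/
def IsG (L : ℕ) (p : ℕ → ℝ) (G : DegreeDist) : Prop :=
  (∀ d, 1 ≤ d → d ≤ L → G.p d = p d) ∧
  G.p (L + 1) = pGt L p ∧
  ∀ d, L + 1 < d → G.p d = 0

/-- `κ = (μ - ∑_{d=1}^L d p_d) / p_{>L}`. -/
noncomputable def kappa (L : ℕ) (p : ℕ → ℝ) (μ : ℝ) : ℝ :=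
  (μ - ∑ d ∈ Finset.Icc 1 L, (d : ℝ) * p d) / pGt L p

/-- `r_m = (κ - (L+1)) / (m - (L+1))`. -/
noncomputable def rmass (L : ℕ) (κ : ℝ) (m : ℕ) : ℝ :=
  (κ - ((L : ℝ) + 1)) / ((m : ℝ) - ((L : ℝ) + 1))

/-- The distribution `G_m`: mass `(1-r_m) p_{>L}` at `L+1` and `r_m p_{>L}` at `m`. -/
def IsGm (L : ℕ) (p : ℕ → ℝ) (μ : ℝ) (m : ℕ) (Gm : DegreeDist) : Prop :=
  (∀ d, 1 ≤ d → d ≤ L → Gm.p d = p d) ∧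
  Gm.p (L + 1) = (1 - rmass L (kappa L p μ) m) * pGt L p ∧
  Gm.p m = rmass L (kappa L p μ) m * pGt L p ∧
  ∀ d, L + 1 < d → d ≠ m → Gm.p d = 0

/-- The distribution `H = H(μ, p_L)`: remaining mass at `⌊κ⌋` and `⌊κ⌋+1`, preserving mean `μ`. -/
def IsH (L : ℕ) (p : ℕ → ℝ) (μ : ℝ) (H : DegreeDist) : Prop :=
  (∀ d, 1 ≤ d → d ≤ L → H.p d = p d) ∧
  H.p ⌊kappa L p μ⌋₊ = ((⌊kappa L p μ⌋₊ : ℝ) + 1 - kappa L p μ) * pGt L p ∧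
  H.p (⌊kappa L p μ⌋₊ + 1) = (kappa L p μ - (⌊kappa L p μ⌋₊ : ℝ)) * pGt L p ∧
  ∀ d, L < d → d ≠ ⌊kappa L p μ⌋₊ → d ≠ ⌊kappa L p μ⌋₊ + 1 → H.p d = 0

section AuxStmt5
-- key power inequality
lemma key_pow (L k : ℕ) (s : ℝ) (h0 : 0 ≤ s) (hs : s ≤ Real.exp (-(1 / ((L : ℝ) + 1)))) :
    ((L : ℝ) + 1 + k) * s ^ (L + k) ≤ ((L : ℝ) + 1) * s ^ L := by
  have hL1 : (0:ℝ) < (L:ℝ) + 1 := by positivity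
  set x : ℝ := (k : ℝ) / ((L:ℝ) + 1) with hx
  have hxk : (0:ℝ) ≤ x := by positivity
  have hxval : ((L:ℝ) + 1) * x = k := by rw [hx]; field_simp; try ring
  have hsk : s ^ k ≤ Real.exp (-x) := by
    calc s ^ k ≤ Real.exp (-(1 / ((L : ℝ) + 1))) ^ k := pow_le_pow_left₀ h0 hs k
    _ = Real.exp (-x) := by
        rw [← Real.exp_nat_mul]; congr 1; rw [hx]; try ring
  have hA : (L:ℝ) + 1 + k ≤ ((L:ℝ) + 1) * Real.exp x := by
    have h := Real.add_one_le_exp x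
    calc (L:ℝ) + 1 + k = ((L:ℝ) + 1) * (x + 1) := by rw [hx]; field_simp; try ring
    _ ≤ ((L:ℝ) + 1) * Real.exp x := by
        exact mul_le_mul_of_nonneg_left h hL1.le
  have h1 : ((L : ℝ) + 1 + k) * s ^ k ≤ (L:ℝ) + 1 := by
    calc ((L : ℝ) + 1 + k) * s ^ k ≤ ((L : ℝ) + 1 + k) * Real.exp (-x) :=
          mul_le_mul_of_nonneg_left hsk (by positivity)
    _ ≤ (((L:ℝ) + 1) * Real.exp x) * Real.exp (-x) :=
          mul_le_mul_of_nonneg_right hA (Real.exp_nonneg _)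
    _ = (L:ℝ) + 1 := by rw [mul_assoc, ← Real.exp_add]; simp
  calc ((L : ℝ) + 1 + k) * s ^ (L + k) = (((L : ℝ) + 1 + k) * s ^ k) * s ^ L := by
        rw [pow_add]; ring
  _ ≤ ((L:ℝ) + 1) * s ^ L := mul_le_mul_of_nonneg_right h1 (pow_nonneg h0 L)

lemma summable_pgf (F : DegreeDist) {s : ℝ} (h0 : 0 ≤ s) (h1 : s ≤ 1) :
    Summable fun d : ℕ => F.p d * s ^ d :=
  Summable.of_nonneg_of_le (fun d => mul_nonneg (F.nonneg d) (pow_nonneg h0 d))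
    (fun d => mul_le_of_le_one_right (F.nonneg d) (pow_le_one₀ h0 h1)) F.psummable

lemma summable_pgfD (F : DegreeDist) {s : ℝ} (h0 : 0 ≤ s) (h1 : s ≤ 1) :
    Summable fun d : ℕ => (d : ℝ) * F.p d * s ^ (d - 1) :=
  Summable.of_nonneg_of_le
    (fun d => mul_nonneg (mul_nonneg (Nat.cast_nonneg d) (F.nonneg d)) (pow_nonneg h0 _))
    (fun d => mul_le_of_le_one_right (mul_nonneg (Nat.cast_nonneg d) (F.nonneg d))
      (pow_le_one₀ h0 h1)) F.mean_summable

lemma pgfD_zero (F : DegreeDist) : pgfD F 0 = F.p 1 := by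
  unfold pgfD
  rw [tsum_eq_single 1]
  · norm_num
  · intro b hb
    have : b = 0 ∨ 2 ≤ b := by omega
    rcases this with h | h
    · simp [h]
    · rw [zero_pow (show b - 1 ≠ 0 by omega)]; ring

end AuxStmt5

set_option maxHeartbeats 2000000 in
/-- If `z̃_G ≤ e^{-1/(L+1)}`, then for every `F ∈ F(μ, p_L)` one has
`g_F(z̃_F) ≤ g_G(z̃_G^{(μ)})`, i.e. `ξ_F ≥ 1 - g_G(z̃_G^{(μ)})`. -/



theorem tail_does_not_determine_giant_stmt5
    (L : ℕ) (hL : 1 ≤ L) (p : ℕ → ℝ)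
    (hp : ∀ i, 0 ≤ p i) (hplt : ∑ i ∈ Finset.Icc 1 L, p i < 1)
    (μ : ℝ) (hμ : 0 < μ)
    (G : DegreeDist) (hG : IsG L p G)
    (zG : ℝ) (hzG : IsSmallestRoot G (mu G) zG)
    (hcond : zG ≤ Real.exp (-(1 / ((L : ℝ) + 1))))
    (zGmu : ℝ) (hzGmu : IsSmallestRoot G μ zGmu)
    (F : DegreeDist) (hF : MemF L p F) (hFmu : mu F = μ)
    (zF : ℝ) (hzF : IsSmallestRoot F (mu F) zF) :
    pgf F zF ≤ pgf G zGmu := by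
  obtain ⟨hzG01, hzGroot, -⟩ := hzG
  obtain ⟨hzGmu01, hzGmuroot, hzGmumin⟩ := hzGmu
  obtain ⟨hzF01, hzFroot, hzFmin⟩ := hzF
  have hzG0 : (0:ℝ) ≤ zG := hzG01.1
  have hzG1 : zG ≤ 1 := hzG01.2
  have hzGmu0 : (0:ℝ) ≤ zGmu := hzGmu01.1
  have hzGmu1 : zGmu ≤ 1 := hzGmu01.2
  have hzF0 : (0:ℝ) ≤ zF := hzF01.1
  have hzF1 : zF ≤ 1 := hzF01.2
  -- G vanishes outside range (L+2)
  have hGz : ∀ b : ℕ, b ∉ Finset.range (L+2) → G.p b = 0 := by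
    intro b hb
    exact hG.2.2 b (by simp only [Finset.mem_range, not_lt] at hb; omega)
  have hpgfG : ∀ s : ℝ, pgf G s = ∑ d ∈ Finset.range (L+2), G.p d * s ^ d := by
    intro s; exact tsum_eq_sum (fun b hb => by rw [hGz b hb]; ring)
  have hpgfDG : ∀ s : ℝ, pgfD G s = ∑ d ∈ Finset.range (L+2), (d:ℝ) * G.p d * s ^ (d-1) := by
    intro s; exact tsum_eq_sum (fun b hb => by rw [hGz b hb]; ring)
  have hmuGsum : mu G = ∑ d ∈ Finset.range (L+2), (d:ℝ) * G.p d :=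
    tsum_eq_sum (fun b hb => by rw [hGz b hb]; ring)
  -- F and G agree below L+1
  have hFG : ∀ d, d < L + 1 → F.p d = G.p d := by
    intro d hd
    rcases Nat.eq_zero_or_pos d with h | h
    · rw [h, F.zero, G.zero]
    · rw [hF d h (by omega), hG.1 d h (by omega)]
  -- head sum of probabilities
  have hheadp : ∑ i ∈ Finset.range (L+1), F.p i = ∑ i ∈ Finset.Icc 1 L, p i := by
    have hins : Finset.range (L+1) = insert 0 (Finset.Icc 1 L) := by
      ext x; simp only [Finset.mem_range, Finset.mem_insert, Finset.mem_Icc]; omega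
    rw [hins, Finset.sum_insert (by simp), F.zero, zero_add]
    exact Finset.sum_congr rfl (fun i hi => by
      simp only [Finset.mem_Icc] at hi; exact hF i hi.1 hi.2)
  have htailF : ∑' n : ℕ, F.p (n + (L+1)) = pGt L p := by
    have h := Summable.sum_add_tsum_nat_add (f := F.p) (L+1) F.psummable
    rw [F.sum_one, hheadp] at h
    unfold pGt; linarith
  have hsump_tail : Summable (fun n : ℕ => F.p (n + (L+1))) :=
    (summable_nat_add_iff (L+1)).2 F.psummable
  have hsummean_tail : Summable (fun n : ℕ => ((n + (L+1) : ℕ) : ℝ) * F.p (n + (L+1))) :=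
    (summable_nat_add_iff (L+1)).2 F.mean_summable
  -- mean comparison : mu G ≤ μ
  have hmusplit : mu F = ∑ i ∈ Finset.range (L+1), ((i:ℝ) * F.p i)
      + ∑' n : ℕ, ((n + (L+1) : ℕ) : ℝ) * F.p (n + (L+1)) := by
    unfold mu
    exact (Summable.sum_add_tsum_nat_add (L+1) F.mean_summable).symm
  have hmuGle : mu G ≤ μ := by
    have h1 : mu G = ∑ i ∈ Finset.range (L+1), ((i:ℝ) * F.p i) + ((L:ℝ)+1) * pGt L p := by
      rw [hmuGsum, Finset.sum_range_succ]
      congr 1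
      · exact Finset.sum_congr rfl (fun i hi => by rw [hFG i (Finset.mem_range.mp hi)])
      · rw [hG.2.1]; push_cast; ring
    have h2 : ((L:ℝ)+1) * pGt L p ≤ ∑' n : ℕ, ((n + (L+1) : ℕ) : ℝ) * F.p (n + (L+1)) := by
      rw [← htailF, ← tsum_mul_left]
      refine Summable.tsum_le_tsum (fun n => ?_) (hsump_tail.mul_left _) hsummean_tail
      have hc : ((L:ℝ)+1) ≤ ((n + (L+1) : ℕ) : ℝ) := by
        push_cast; linarith [Nat.cast_nonneg (α := ℝ) n]
      exact mul_le_mul_of_nonneg_right hc (F.nonneg _)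
    rw [← hFmu, hmusplit, h1]
    linarith
  -- Step D : zGmu ≤ zG
  have hp1G : pgfD G 0 = p 1 := by rw [pgfD_zero]; exact hG.1 1 le_rfl hL
  have hcontG : ContinuousOn (fun s : ℝ => μ * s - pgfD G s) (Set.Icc 0 zG) := by
    have hfun : (fun s : ℝ => μ * s - pgfD G s)
        = fun s => μ * s - ∑ d ∈ Finset.range (L+2), (d:ℝ) * G.p d * s ^ (d-1) :=
      funext fun s => by rw [hpgfDG]
    rw [hfun]
    exact ((continuous_const.mul continuous_id).sub
      (continuous_finset_sum _ fun i _ => continuous_const.mul (continuous_pow _))).continuousOn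
  have hzGmu_le_zG : zGmu ≤ zG := by
    have hmem : (0:ℝ) ∈ Set.Icc (μ * 0 - pgfD G 0) (μ * zG - pgfD G zG) := by
      constructor
      · rw [hp1G, mul_zero, zero_sub, neg_nonpos]; exact hp 1
      · rw [← hzGroot]
        have := mul_le_mul_of_nonneg_right hmuGle hzG0
        linarith
    obtain ⟨s0, hs0mem, hs0⟩ := intermediate_value_Icc hzG0 hcontG hmem
    have hs0' : μ * s0 - pgfD G s0 = 0 := hs0
    have hroot : μ * s0 = pgfD G s0 := by linarith
    exact le_trans (hzGmumin s0 ⟨hs0mem.1, le_trans hs0mem.2 hzG1⟩ hroot) hs0mem.2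
  have hzGmuexp : zGmu ≤ Real.exp (-(1 / ((L : ℝ) + 1))) := le_trans hzGmu_le_zG hcond
  -- Step E : pgfD F zGmu ≤ pgfD G zGmu
  have hDle : pgfD F zGmu ≤ pgfD G zGmu := by
    have hsplF : pgfD F zGmu = ∑ d ∈ Finset.range (L+1), ((d:ℝ) * F.p d * zGmu ^ (d-1))
        + ∑' n : ℕ, ((n + (L+1):ℕ):ℝ) * F.p (n + (L+1)) * zGmu ^ ((n + (L+1)) - 1) := by
      unfold pgfD
      exact (Summable.sum_add_tsum_nat_add (L+1) (summable_pgfD F hzGmu0 hzGmu1)).symm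
    have htail_le : ∑' n : ℕ, ((n + (L+1):ℕ):ℝ) * F.p (n + (L+1)) * zGmu ^ ((n + (L+1)) - 1)
        ≤ ∑' n : ℕ, (((L:ℝ)+1) * zGmu ^ L) * F.p (n + (L+1)) := by
      refine Summable.tsum_le_tsum (fun n => ?_)
        ((summable_nat_add_iff (L+1)).2 (summable_pgfD F hzGmu0 hzGmu1))
        (hsump_tail.mul_left _)
      have hcast : ((n + (L+1):ℕ):ℝ) = (L:ℝ) + 1 + n := by push_cast; ring
      have hexp' : n + (L+1) - 1 = L + n := by omega
      rw [hcast, hexp', mul_right_comm]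
      exact mul_le_mul_of_nonneg_right (key_pow L n zGmu hzGmu0 hzGmuexp) (F.nonneg _)
    have htsum : ∑' n : ℕ, (((L:ℝ)+1) * zGmu ^ L) * F.p (n + (L+1))
        = ((L:ℝ)+1) * zGmu ^ L * pGt L p := by
      rw [tsum_mul_left, htailF]
    have hsplG : pgfD G zGmu = ∑ d ∈ Finset.range (L+1), ((d:ℝ) * F.p d * zGmu ^ (d-1))
        + ((L:ℝ)+1) * zGmu ^ L * pGt L p := by
      rw [hpgfDG, Finset.sum_range_succ]
      congr 1
      · exact Finset.sum_congr rfl (fun i hi => by rw [hFG i (Finset.mem_range.mp hi)])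
      · rw [hG.2.1]
        have hL1 : L + 1 - 1 = L := by omega
        rw [hL1]; push_cast; ring
    rw [hsplF, hsplG]
    linarith
  -- Step F : zF ≤ zGmu
  have hcontF : ContinuousOn (pgfD F) (Set.Icc 0 zGmu) := by
    have h : ContinuousOn (fun x : ℝ => ∑' d : ℕ, (d:ℝ) * F.p d * x ^ (d-1)) (Set.Icc 0 zGmu) := by
      apply continuousOn_tsum (u := fun d : ℕ => (d:ℝ) * F.p d)
        (fun d => (continuous_const.mul (continuous_pow (d-1))).continuousOn)
        F.mean_summable
      intro n x hx
      have hx0 : (0:ℝ) ≤ x := hx.1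
      have hx1 : x ≤ 1 := le_trans hx.2 hzGmu1
      simp only [Pi.mul_apply]
      rw [Real.norm_eq_abs, abs_mul, abs_pow,
        abs_of_nonneg (mul_nonneg (Nat.cast_nonneg n) (F.nonneg n)), abs_of_nonneg hx0]
      exact mul_le_of_le_one_right (mul_nonneg (Nat.cast_nonneg n) (F.nonneg n))
        (pow_le_one₀ hx0 hx1)
    exact h
  have hzF_le : zF ≤ zGmu := by
    have hcontψ : ContinuousOn (fun s : ℝ => μ * s - pgfD F s) (Set.Icc 0 zGmu) :=
      ((continuous_const.mul continuous_id).continuousOn).sub hcontF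
    have hmem : (0:ℝ) ∈ Set.Icc (μ * 0 - pgfD F 0) (μ * zGmu - pgfD F zGmu) := by
      constructor
      · rw [pgfD_zero, hF 1 le_rfl hL, mul_zero, zero_sub, neg_nonpos]; exact hp 1
      · linarith [hzGmuroot, hDle]
    obtain ⟨s1, hs1mem, hs1⟩ := intermediate_value_Icc hzGmu0 hcontψ hmem
    have hs1' : μ * s1 - pgfD F s1 = 0 := hs1
    have hroot : mu F * s1 = pgfD F s1 := by rw [hFmu]; linarith
    exact le_trans (hzFmin s1 ⟨hs1mem.1, le_trans hs1mem.2 hzGmu1⟩ hroot) hs1mem.2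
  -- Step G : pgf F zF ≤ pgf G zF
  have hsplpF : pgf F zF = ∑ d ∈ Finset.range (L+1), F.p d * zF ^ d
      + ∑' n : ℕ, F.p (n + (L+1)) * zF ^ (n + (L+1)) := by
    unfold pgf
    exact (Summable.sum_add_tsum_nat_add (L+1) (summable_pgf F hzF0 hzF1)).symm
  have htailG : ∑' n : ℕ, F.p (n + (L+1)) * zF ^ (n + (L+1))
      ≤ ∑' n : ℕ, F.p (n + (L+1)) * zF ^ (L+1) := by
    refine Summable.tsum_le_tsum (fun n => ?_)
      ((summable_nat_add_iff (L+1)).2 (summable_pgf F hzF0 hzF1))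
      (hsump_tail.mul_right _)
    exact mul_le_mul_of_nonneg_left (pow_le_pow_of_le_one hzF0 hzF1 (by omega)) (F.nonneg _)
  have h3 : ∑' n : ℕ, F.p (n + (L+1)) * zF ^ (L+1) = pGt L p * zF ^ (L+1) := by
    rw [tsum_mul_right, htailF]
  have hsplpG : pgf G zF = ∑ d ∈ Finset.range (L+1), F.p d * zF ^ d + pGt L p * zF ^ (L+1) := by
    rw [hpgfG, Finset.sum_range_succ]
    congr 1
    · exact Finset.sum_congr rfl (fun i hi => by rw [hFG i (Finset.mem_range.mp hi)])
    · rw [hG.2.1]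
  have hFGpgf : pgf F zF ≤ pgf G zF := by
    rw [hsplpF, hsplpG]; linarith
  -- Step H : monotonicity of pgf G
  have hmono : pgf G zF ≤ pgf G zGmu := by
    rw [hpgfG, hpgfG]
    refine Finset.sum_le_sum (fun i _ => ?_)
    exact mul_le_mul_of_nonneg_left (pow_le_pow_left₀ hzF0 hzF_le i) (G.nonneg i)
  exact le_trans hFGpgf hmono
end

section
/- Fix L ≥ 1, probabilities p_1,…,p_L and a mean μ > 0 with κ ≥ L+1, and let H = H(μ,p_L). If z̃_H ≤ e^{−2/(L+1)}, then for every F ∈ F(μ,p_L) one has g_F(z̃_F) ≥ g_H(z̃_H), i.e., ξ_F ≤ ξ_H; moreover H ∈ F(μ,p_L), so the supremum over F ∈ F(μ,p_L) of ξ_F equals ξ_H. -/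
open scoped BigOperators

lemma chainMono (u : ℕ → ℝ) (d0 : ℕ)
    (hmono : ∀ j, d0 ≤ j → u (j+1) - u j ≤ u (j+2) - u (j+1)) :
    ∀ k j, d0 ≤ j → u (j+1) - u j ≤ u (j+k+1) - u (j+k) := by
  intro k
  induction k with
  | zero => intro j hj; simp
  | succ k ih =>
    intro j hj
    calc u (j+1) - u j ≤ u (j+k+1) - u (j+k) := ih j hj
      _ ≤ u (j+k+2) - u (j+k+1) := hmono (j+k) (le_trans hj (Nat.le_add_right _ _))
      _ = u (j+(k+1)+1) - u (j+(k+1)) := by ring_nf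

lemma secant (u : ℕ → ℝ) (d0 a : ℕ)
    (hmono : ∀ j, d0 ≤ j → u (j+1) - u j ≤ u (j+2) - u (j+1))
    (ha : d0 ≤ a) :
    ∀ d, d0 ≤ d → u a + (u (a+1) - u a) * ((d:ℝ) - a) ≤ u d := by
  have hchain := chainMono u d0 hmono
  -- upward: d = a+1+n
  have hup : ∀ n : ℕ, u a + (u (a+1) - u a) * (((a+1+n : ℕ):ℝ) - a) ≤ u (a+1+n) := by
    intro n
    induction n with
    | zero => push_cast; ring_nf; simp
    | succ n ih =>
      have h1 : u (a+1) - u a ≤ u (a+n+2) - u (a+n+1) := hchain (n+1) a ha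
      have h2 : a+1+(n+1) = a+n+2 := by ring
      have h3 : a+1+n = a+n+1 := by ring
      rw [h2]
      rw [h3] at ih
      push_cast at ih ⊢
      linarith
  -- downward
  have hdown : ∀ n : ℕ, ∀ d : ℕ, d + n = a → d0 ≤ d →
      u a + (u (a+1) - u a) * ((d:ℝ) - a) ≤ u d := by
    intro n
    induction n with
    | zero => intro d hd _; subst hd; simp
    | succ n ih =>
      intro d hd hd0
      have hda : d + 1 + n = a := by omega
      have ih' := ih (d+1) hda (le_trans hd0 (Nat.le_succ d))
      have h1 : u (d+1) - u d ≤ u (a+1) - u a := by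
        have := hchain (n+1) d hd0
        have e1 : d+(n+1) = a := by omega
        rwa [e1] at this
      have hc : ((a:ℝ)) = (d:ℝ) + (n:ℝ) + 1 := by exact_mod_cast congrArg (Nat.cast : ℕ → ℝ) hd.symm
      push_cast at ih' ⊢
      nlinarith [ih', h1]
  intro d hd
  rcases le_or_gt d a with h | h
  · exact hdown (a - d) d (by omega) hd
  · have : d = a + 1 + (d - a - 1) := by omega
    rw [this]
    exact hup (d - a - 1)
-- Δmono for u j = s^j, any 0 ≤ s ≤ 1
lemma powMono (s : ℝ) (hs0 : 0 ≤ s) (_hs1 : s ≤ 1) :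
    ∀ j : ℕ, 0 ≤ j → s^(j+1) - s^j ≤ s^(j+2) - s^(j+1) := by
  intro j _
  have h1 : s^(j+1) = s^j * s := pow_succ s j
  have h2 : s^(j+2) = s^j * s * s := by rw [pow_succ, pow_succ]
  nlinarith [mul_nonneg (pow_nonneg hs0 j) (sq_nonneg (1 - s))]

-- the exp bound: exp(-(2/(L+1))) * (L+3) ≤ L+1
lemma expBound (L : ℕ) :
    Real.exp (-(2 / ((L : ℝ) + 1))) * ((L:ℝ) + 3) ≤ (L:ℝ) + 1 := by
  have hL1 : (0:ℝ) < (L:ℝ) + 1 := by positivity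
  have h1 : 1 + 2/((L:ℝ)+1) ≤ Real.exp (2/((L:ℝ)+1)) := by
    linarith [Real.add_one_le_exp (2/((L:ℝ)+1))]
  have h2 : Real.exp (-(2 / ((L : ℝ) + 1))) = (Real.exp (2/((L:ℝ)+1)))⁻¹ := by
    rw [Real.exp_neg]
  rw [h2]
  have hepos : (0:ℝ) < Real.exp (2/((L:ℝ)+1)) := Real.exp_pos _
  rw [inv_mul_le_iff₀ hepos]
  calc (L:ℝ) + 3 = ((L:ℝ)+1) * (1 + 2/((L:ℝ)+1)) := by field_simp; ring
    _ ≤ ((L:ℝ)+1) * Real.exp (2/((L:ℝ)+1)) := by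
        exact mul_le_mul_of_nonneg_left h1 (le_of_lt hL1)
    _ = Real.exp (2/((L:ℝ)+1)) * ((L:ℝ)+1) := by ring

-- Δmono for u j = j * s^(j-1), j ≥ L+1, s ∈ [0, exp(-(2/(L+1)))]
lemma derivMono (L : ℕ) (s : ℝ) (hs0 : 0 ≤ s)
    (hsE : s ≤ Real.exp (-(2 / ((L : ℝ) + 1)))) :
    ∀ j : ℕ, L + 1 ≤ j →
      ((j+1:ℕ):ℝ) * s^((j+1)-1) - (j:ℝ) * s^(j-1)
        ≤ ((j+2:ℕ):ℝ) * s^((j+2)-1) - ((j+1:ℕ):ℝ) * s^((j+1)-1) := by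
  intro j hj
  obtain ⟨m, rfl⟩ : ∃ m, j = m + 1 := ⟨j - 1, by omega⟩
  have hLm : L ≤ m := by omega
  -- s ≤ (m+1)/(m+3), i.e. (m+3)*s ≤ m+1
  have hE1 : Real.exp (-(2 / ((L : ℝ) + 1))) * ((L:ℝ) + 3) ≤ (L:ℝ) + 1 := expBound L
  have hEpos : (0:ℝ) < Real.exp (-(2 / ((L : ℝ) + 1))) := Real.exp_pos _
  have hkey : ((m:ℝ)+3) * s ≤ (m:ℝ)+1 := by
    have hLc : (L:ℝ) ≤ (m:ℝ) := by exact_mod_cast hLm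
    have hE2 : Real.exp (-(2 / ((L : ℝ) + 1))) ≤ ((L:ℝ)+1)/((L:ℝ)+3) := by
      rw [le_div_iff₀ (by positivity)]; exact hE1
    have hE3 : ((L:ℝ)+1)/((L:ℝ)+3) ≤ ((m:ℝ)+1)/((m:ℝ)+3) := by
      rw [div_le_div_iff₀ (by positivity) (by positivity)]; nlinarith
    have hss : s ≤ ((m:ℝ)+1)/((m:ℝ)+3) := le_trans hsE (le_trans hE2 hE3)
    calc ((m:ℝ)+3)*s ≤ ((m:ℝ)+3)*(((m:ℝ)+1)/((m:ℝ)+3)) :=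
          mul_le_mul_of_nonneg_left hss (by positivity)
      _ = (m:ℝ)+1 := by field_simp
  have e1 : (m+1+1) - 1 = m+1 := by omega
  have e2 : (m+1+2) - 1 = m+2 := by omega
  have e3 : (m+1) - 1 = m := by omega
  rw [e1, e2, e3]
  push_cast
  have h1 : s^(m+1) = s^m * s := pow_succ s m
  have h2 : s^(m+2) = s^m * s * s := by rw [pow_succ, pow_succ]
  have hfac : 0 ≤ s^m * ((1 - s) * (((m:ℝ)+1) - ((m:ℝ)+3)*s)) := by
    have hs1 : s ≤ 1 := by nlinarith
    apply mul_nonneg (pow_nonneg hs0 m)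
    apply mul_nonneg (by linarith) (by linarith)
  nlinarith [hfac]
lemma tailBound (L : ℕ) (p : ℕ → ℝ) (μ : ℝ)
    (F : DegreeDist) (hF : MemF L p F) (hFμ : mu F = μ)
    (u : ℕ → ℝ) (hsum : Summable (fun d => F.p d * u d)) (A B : ℝ)
    (hline : ∀ d : ℕ, L + 1 ≤ d → A + B * d ≤ u d) :
    (∑ d ∈ Finset.Icc 1 L, p d * u d) + A * pGt L p
      + B * (μ - ∑ d ∈ Finset.Icc 1 L, (d : ℝ) * p d)
      ≤ ∑' d, F.p d * u d := by
  set v : ℕ → ℝ := fun d => if d ∈ Finset.Icc 1 L then F.p d * u d else F.p d * (A + B * d)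
    with hv
  set c : ℕ → ℝ := fun d =>
    if d ∈ Finset.Icc 1 L then F.p d * u d - F.p d * (A + B * d) else 0 with hc
  have hvdecomp : ∀ d, v d = A * F.p d + B * ((d:ℝ) * F.p d) + c d := by
    intro d
    by_cases hd : d ∈ Finset.Icc 1 L
    · simp only [hv, hc, if_pos hd]; ring
    · simp only [hv, hc, if_neg hd]; ring
  have hsumc : Summable c := summable_of_ne_finset_zero (s := Finset.Icc 1 L)
    (fun d hd => by simp only [hc, if_neg hd])
  have hsum1 : Summable (fun d => A * F.p d) := F.psummable.mul_left A
  have hsum2 : Summable (fun d : ℕ => B * ((d:ℝ) * F.p d)) := F.mean_summable.mul_left B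
  have hsumv : Summable v := by
    rw [funext hvdecomp]
    exact (hsum1.add hsum2).add hsumc
  have hvle : ∀ d, v d ≤ F.p d * u d := by
    intro d
    by_cases hd : d ∈ Finset.Icc 1 L
    · simp only [hv, if_pos hd]; exact le_refl _
    · simp only [hv, if_neg hd]
      rcases Nat.eq_zero_or_pos d with h0 | h0
      · subst h0; simp [F.zero]
      · have hd' : L + 1 ≤ d := by
          simp only [Finset.mem_Icc, not_and, not_le] at hd
          omega
        exact mul_le_mul_of_nonneg_left (hline d hd') (F.nonneg d)
  have hmain : ∑' d, v d ≤ ∑' d, F.p d * u d := Summable.tsum_le_tsum hvle hsumv hsum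
  have htv : ∑' d, v d = A * 1 + B * μ + ∑ d ∈ Finset.Icc 1 L,
      (F.p d * u d - F.p d * (A + B * d)) := by
    rw [funext hvdecomp]
    rw [Summable.tsum_add (hsum1.add hsum2) hsumc, Summable.tsum_add hsum1 hsum2]
    rw [tsum_mul_left, tsum_mul_left, F.sum_one]
    have hmu : ∑' d : ℕ, (d:ℝ) * F.p d = μ := by rw [← hFμ]; rfl
    rw [hmu]
    rw [tsum_eq_sum (s := Finset.Icc 1 L) (f := c) (fun d hd => if_neg hd)]
    rw [Finset.sum_congr rfl (fun d hd => if_pos hd)]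
  rw [htv] at hmain
  refine le_trans (le_of_eq ?_) hmain
  have hpd : ∀ d ∈ Finset.Icc 1 L, F.p d = p d := by
    intro d hd
    simp only [Finset.mem_Icc] at hd
    exact hF d hd.1 hd.2
  rw [Finset.sum_sub_distrib]
  have h1 : ∑ d ∈ Finset.Icc 1 L, F.p d * u d = ∑ d ∈ Finset.Icc 1 L, p d * u d :=
    Finset.sum_congr rfl (fun d hd => by rw [hpd d hd])
  have h2 : ∑ d ∈ Finset.Icc 1 L, F.p d * (A + B * d)
      = A * (∑ d ∈ Finset.Icc 1 L, p d) + B * (∑ d ∈ Finset.Icc 1 L, (d:ℝ) * p d) := by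
    rw [Finset.mul_sum, Finset.mul_sum, ← Finset.sum_add_distrib]
    refine Finset.sum_congr rfl (fun d hd => ?_)
    rw [hpd d hd]; ring
  rw [h1, h2]
  unfold pGt
  ring
lemma Hsum (L : ℕ) (p : ℕ → ℝ) (μ : ℝ) (H : DegreeDist) (hH : IsH L p μ H)
    (ha : L + 1 ≤ ⌊kappa L p μ⌋₊) (f : ℕ → ℝ) :
    ∑' d, H.p d * f d = (∑ d ∈ Finset.Icc 1 L, p d * f d)
      + ((⌊kappa L p μ⌋₊ : ℝ) + 1 - kappa L p μ) * pGt L p * f ⌊kappa L p μ⌋₊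
      + (kappa L p μ - (⌊kappa L p μ⌋₊ : ℝ)) * pGt L p * f (⌊kappa L p μ⌋₊ + 1) := by
  set a := ⌊kappa L p μ⌋₊ with hadef
  set S : Finset ℕ := insert a (insert (a+1) (Finset.Icc 1 L)) with hS
  have hsum : ∑' d, H.p d * f d = ∑ d ∈ S, H.p d * f d := by
    refine tsum_eq_sum (fun d hd => ?_)
    simp only [hS, Finset.mem_insert, Finset.mem_Icc, not_or, not_and, not_le] at hd
    rcases Nat.eq_zero_or_pos d with h0 | h0
    · subst h0; simp [H.zero]
    · rcases le_or_gt d L with hdL | hdL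
      · exact absurd (hd.2.2 h0) (by omega)
      · rw [hH.2.2.2 d hdL hd.1 hd.2.1, zero_mul]
  have hna : a ∉ insert (a+1) (Finset.Icc 1 L) := by
    simp only [Finset.mem_insert, Finset.mem_Icc]
    omega
  have hna1 : a + 1 ∉ Finset.Icc 1 L := by
    simp only [Finset.mem_Icc]; omega
  rw [hsum, hS, Finset.sum_insert hna, Finset.sum_insert hna1]
  rw [hH.2.1, hH.2.2.1]
  have hIcc : ∑ d ∈ Finset.Icc 1 L, H.p d * f d = ∑ d ∈ Finset.Icc 1 L, p d * f d := by
    refine Finset.sum_congr rfl (fun d hd => ?_)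
    simp only [Finset.mem_Icc] at hd
    rw [hH.1 d hd.1 hd.2]
  rw [hIcc]
  ring

lemma pgf_summable (F : DegreeDist) {s : ℝ} (hs0 : 0 ≤ s) (hs1 : s ≤ 1) :
    Summable (fun d : ℕ => F.p d * s ^ d) := by
  refine Summable.of_nonneg_of_le
    (fun d => mul_nonneg (F.nonneg d) (pow_nonneg hs0 d)) (fun d => ?_) F.psummable
  calc F.p d * s ^ d ≤ F.p d * 1 :=
        mul_le_mul_of_nonneg_left (pow_le_one₀ hs0 hs1) (F.nonneg d)
    _ = F.p d := mul_one _

lemma pgfD_summable (F : DegreeDist) {s : ℝ} (hs0 : 0 ≤ s) (hs1 : s ≤ 1) :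
    Summable (fun d : ℕ => F.p d * ((d:ℝ) * s ^ (d-1))) := by
  refine Summable.of_nonneg_of_le
    (fun d => mul_nonneg (F.nonneg d) (mul_nonneg (Nat.cast_nonneg d) (pow_nonneg hs0 _)))
    (fun d => ?_) F.mean_summable
  calc F.p d * ((d:ℝ) * s ^ (d-1)) ≤ F.p d * ((d:ℝ) * 1) := by
        refine mul_le_mul_of_nonneg_left ?_ (F.nonneg d)
        exact mul_le_mul_of_nonneg_left (pow_le_one₀ hs0 hs1) (Nat.cast_nonneg d)
    _ = (d:ℝ) * F.p d := by ring

lemma pgf_mono (F : DegreeDist) {x y : ℝ} (hx : 0 ≤ x) (hxy : x ≤ y) (hy : y ≤ 1) :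
    pgf F x ≤ pgf F y := by
  refine Summable.tsum_le_tsum (fun d => ?_) (pgf_summable F hx (le_trans hxy hy))
    (pgf_summable F (le_trans hx hxy) hy)
  exact mul_le_mul_of_nonneg_left (pow_le_pow_left₀ hx hxy d) (F.nonneg d)

lemma pgf_comp (L : ℕ) (p : ℕ → ℝ) (μ : ℝ) (H : DegreeDist) (hH : IsH L p μ H)
    (ha : L + 1 ≤ ⌊kappa L p μ⌋₊)
    (hmean : μ - ∑ d ∈ Finset.Icc 1 L, (d:ℝ) * p d = kappa L p μ * pGt L p)
    (F : DegreeDist) (hF : MemF L p F) (hFμ : mu F = μ)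
    (s : ℝ) (hs0 : 0 ≤ s) (hs1 : s ≤ 1) : pgf H s ≤ pgf F s := by
  set a := ⌊kappa L p μ⌋₊ with hadef
  set κ := kappa L p μ with hκdef
  set B : ℝ := s^(a+1) - s^a with hB
  set A : ℝ := s^a - B * a with hA
  have hline : ∀ d : ℕ, L + 1 ≤ d → A + B * d ≤ s ^ d := by
    intro d _
    have := secant (fun d => s ^ d) 0 a (fun j _ => powMono s hs0 hs1 j (Nat.zero_le j))
      (Nat.zero_le a) d (Nat.zero_le d)
    simp only [hA, hB]
    linarith
  have hTB := tailBound L p μ F hF hFμ (fun d => s ^ d) (pgf_summable F hs0 hs1) A B hline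
  have hpgfF : pgf F s = ∑' d, F.p d * s ^ d := rfl
  have hpgfH := Hsum L p μ H hH ha (fun d => s ^ d)
  have hpgfH' : pgf H s = (∑ d ∈ Finset.Icc 1 L, p d * s ^ d)
      + ((a : ℝ) + 1 - κ) * pGt L p * s ^ a
      + (κ - (a : ℝ)) * pGt L p * s ^ (a+1) := hpgfH
  rw [hpgfF]
  rw [hpgfH']
  refine le_trans (le_of_eq ?_) hTB
  rw [hmean, hA, hB]
  ring

lemma pgfD_comp (L : ℕ) (p : ℕ → ℝ) (μ : ℝ) (H : DegreeDist) (hH : IsH L p μ H)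
    (ha : L + 1 ≤ ⌊kappa L p μ⌋₊)
    (hmean : μ - ∑ d ∈ Finset.Icc 1 L, (d:ℝ) * p d = kappa L p μ * pGt L p)
    (F : DegreeDist) (hF : MemF L p F) (hFμ : mu F = μ)
    (s : ℝ) (hs0 : 0 ≤ s) (hsE : s ≤ Real.exp (-(2 / ((L : ℝ) + 1)))) :
    pgfD H s ≤ pgfD F s := by
  have hs1 : s ≤ 1 := le_trans hsE (by
    rw [Real.exp_le_one_iff]
    exact neg_nonpos.mpr (by positivity))
  set a := ⌊kappa L p μ⌋₊ with hadef
  set κ := kappa L p μ with hκdef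
  set u : ℕ → ℝ := fun d => (d:ℝ) * s ^ (d-1) with hu
  set B : ℝ := u (a+1) - u a with hB
  set A : ℝ := u a - B * a with hA
  have hline : ∀ d : ℕ, L + 1 ≤ d → A + B * d ≤ u d := by
    intro d hd
    have hsec := secant u (L+1) a (fun j hj => derivMono L s hs0 hsE j hj) ha d hd
    have e : A + B * (d:ℝ) = u a + B * ((d:ℝ) - (a:ℝ)) := by rw [hA]; ring
    rw [e, hB]
    exact hsec
  have hTB := tailBound L p μ F hF hFμ u (pgfD_summable F hs0 hs1) A B hline
  have hpgfF : pgfD F s = ∑' d, F.p d * u d := by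
    unfold pgfD
    exact tsum_congr (fun d => by simp only [hu]; ring)
  have hpgfH := Hsum L p μ H hH ha u
  have hua1 : u (a+1) = ((a:ℝ)+1) * s ^ a := by
    simp only [hu, Nat.add_sub_cancel]
    push_cast
    ring
  have hpgfHD : pgfD H s = ∑' d, H.p d * u d := by
    unfold pgfD
    exact tsum_congr (fun d => by simp only [hu]; ring)
  rw [hpgfF, hpgfHD, hpgfH]
  refine le_trans (le_of_eq ?_) hTB
  rw [hmean, hA, hB, hua1]
  simp only [hu]
  ring

lemma pgfD_H_repr (L : ℕ) (p : ℕ → ℝ) (μ : ℝ) (H : DegreeDist) (hH : IsH L p μ H)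
    (ha : L + 1 ≤ ⌊kappa L p μ⌋₊) (s : ℝ) :
    pgfD H s = (∑ d ∈ Finset.Icc 1 L, p d * ((d:ℝ) * s^(d-1)))
      + ((⌊kappa L p μ⌋₊:ℝ) + 1 - kappa L p μ) * pGt L p
          * ((⌊kappa L p μ⌋₊:ℝ) * s^(⌊kappa L p μ⌋₊ - 1))
      + (kappa L p μ - (⌊kappa L p μ⌋₊:ℝ)) * pGt L p
          * (((⌊kappa L p μ⌋₊ + 1 : ℕ):ℝ) * s^((⌊kappa L p μ⌋₊ + 1) - 1)) := by
  have h1 : pgfD H s = ∑' d, H.p d * ((d:ℝ) * s^(d-1)) := by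
    unfold pgfD
    exact tsum_congr (fun d => by ring)
  rw [h1, Hsum L p μ H hH ha (fun d => (d:ℝ) * s^(d-1))]


/-- If `κ ≥ L+1` and `z̃_H ≤ e^{-2/(L+1)}`, then every `F ∈ F(μ, p_L)` has
`g_F(z̃_F) ≥ g_H(z̃_H)` (i.e. `ξ_F ≤ ξ_H`); moreover `H ∈ F(μ, p_L)`, so the supremum of
`ξ_F` over the class equals `ξ_H`. -/
theorem tail_does_not_determine_giant_stmt14
    (L : ℕ) (hL : 1 ≤ L) (p : ℕ → ℝ)
    (hp : ∀ i, 0 ≤ p i) (hplt : ∑ i ∈ Finset.Icc 1 L, p i < 1)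
    (μ : ℝ) (hμ : 0 < μ) (hκ : (L : ℝ) + 1 ≤ kappa L p μ)
    (H : DegreeDist) (hH : IsH L p μ H)
    (zH : ℝ) (hzH : IsSmallestRoot H (mu H) zH)
    (hcond : zH ≤ Real.exp (-(2 / ((L : ℝ) + 1)))) :
    (∀ F : DegreeDist, MemF L p F → mu F = μ →
      ∀ zF : ℝ, IsSmallestRoot F (mu F) zF → pgf H zH ≤ pgf F zF) ∧
    MemF L p H ∧ mu H = μ ∧
    sSup {x : ℝ | ∃ F : DegreeDist, MemF L p F ∧ mu F = μ ∧
        ∃ zF, IsSmallestRoot F (mu F) zF ∧ x = 1 - pgf F zF} =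
      1 - pgf H zH := by
  have hP : 0 < pGt L p := by unfold pGt; linarith
  have ha : L + 1 ≤ ⌊kappa L p μ⌋₊ := Nat.le_floor (by push_cast; exact hκ)
  have hmean : μ - ∑ d ∈ Finset.Icc 1 L, (d:ℝ) * p d = kappa L p μ * pGt L p := by
    unfold kappa
    rw [div_mul_cancel₀ _ (ne_of_gt hP)]
  have hμH : mu H = μ := by
    have h1 : mu H = ∑' (d : ℕ), H.p d * ((d:ℕ):ℝ) := by
      unfold mu
      exact tsum_congr (fun d => mul_comm _ _)
    rw [h1, Hsum L p μ H hH ha (fun d => ((d:ℕ):ℝ))]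
    have h2 : (∑ d ∈ Finset.Icc 1 L, p d * ((d:ℕ):ℝ))
        = ∑ d ∈ Finset.Icc 1 L, ((d:ℕ):ℝ) * p d :=
      Finset.sum_congr rfl (fun d _ => mul_comm _ _)
    rw [h2]
    push_cast
    linear_combination -hmean
  have main : ∀ F : DegreeDist, MemF L p F → mu F = μ →
      ∀ zF : ℝ, IsSmallestRoot F (mu F) zF → pgf H zH ≤ pgf F zF := by
    intro F hF hFμ zF hzF
    obtain ⟨⟨hzF0, hzF1⟩, hrootF, _hminF⟩ := hzF
    obtain ⟨⟨hzH0, hzH1⟩, _hrootH, hminH⟩ := hzH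
    have hzHzF : zH ≤ zF := by
      by_contra hlt
      push_neg at hlt
      have hzFE : zF ≤ Real.exp (-(2 / ((L : ℝ) + 1))) := le_trans (le_of_lt hlt) hcond
      have hD : pgfD H zF ≤ pgfD F zF := pgfD_comp L p μ H hH ha hmean F hF hFμ zF hzF0 hzFE
      have hcont : Continuous (fun s : ℝ => pgfD H s) := by
        have hfun : (fun s : ℝ => pgfD H s) = fun s : ℝ =>
            (∑ d ∈ Finset.Icc 1 L, p d * ((d:ℝ) * s^(d-1)))
            + ((⌊kappa L p μ⌋₊:ℝ) + 1 - kappa L p μ) * pGt L p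
                * ((⌊kappa L p μ⌋₊:ℝ) * s^(⌊kappa L p μ⌋₊ - 1))
            + (kappa L p μ - (⌊kappa L p μ⌋₊:ℝ)) * pGt L p
                * (((⌊kappa L p μ⌋₊ + 1 : ℕ):ℝ) * s^((⌊kappa L p μ⌋₊ + 1) - 1)) :=
          funext (fun s => pgfD_H_repr L p μ H hH ha s)
        rw [hfun]
        refine ((Continuous.add ?_ ?_).add ?_)
        · exact continuous_finset_sum _ (fun d _ => by fun_prop)
        · fun_prop
        · fun_prop
      have hψcont : Continuous (fun s : ℝ => pgfD H s - mu H * s) :=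
        hcont.sub (continuous_const.mul continuous_id)
      have hψzF : pgfD H zF - mu H * zF ≤ 0 := by
        rw [hμH, ← hFμ]
        linarith [hrootF]
      have hψ0 : 0 ≤ pgfD H 0 - mu H * 0 := by
        rw [pgfD_zero H, mul_zero, sub_zero]
        exact H.nonneg 1
      have hsub := intermediate_value_Icc' hzF0 hψcont.continuousOn
      have h0mem : (0:ℝ) ∈ Set.Icc (pgfD H zF - mu H * zF) (pgfD H 0 - mu H * 0) :=
        ⟨hψzF, hψ0⟩
      obtain ⟨s0, hs0mem, hs0eq⟩ := hsub h0mem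
      have hs0Icc : s0 ∈ Set.Icc (0:ℝ) 1 := ⟨hs0mem.1, le_trans hs0mem.2 hzF1⟩
      have hroot0 : mu H * s0 = pgfD H s0 := by
        simp only at hs0eq
        linarith [hs0eq]
      have := hminH s0 hs0Icc hroot0
      have := hs0mem.2
      linarith
    calc pgf H zH ≤ pgf F zH := pgf_comp L p μ H hH ha hmean F hF hFμ zH hzH0 hzH1
      _ ≤ pgf F zF := pgf_mono F hzH0 hzHzF hzF1
  refine ⟨main, fun d h1 h2 => hH.1 d h1 h2, hμH, ?_⟩
  apply IsGreatest.csSup_eq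
  constructor
  · exact ⟨H, fun d h1 h2 => hH.1 d h1 h2, hμH, zH, hzH, rfl⟩
  · rintro x ⟨F, hF, hFμ, zF, hzF, rfl⟩
    have := main F hF hFμ zF hzF
    linarith
end
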